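/- Let I ⊆ ℝ be an open interval, let e₁, e₂, e₃ : I → ℝ³ be differentiable maps forming at every point a positively oriented orthonormal frame with e₃ = e₁ × e₂, let κ : I → ℝ be differentiable, and suppose e₁' = κ·e₂, e₂' = −κ·e₁ and e₃' = 0 on I. Let c : I → ℝ³ be differentiable with c' = e₁, let φ : I → ℝ be three times differentiable and set p := c + φ·e₃. Then on I the triple product of derivatives satisfies (p' × p'') · p''' = φ'·κ³ + φ'''·κ − φ''·κ'. -/

import Mathlib

open Matrix

lemma triple_alg (a b : Fin 3 → ℝ) (ha : a ⬝ᵥ a = 1) (hb : b ⬝ᵥ b = 1)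
    (hab : a ⬝ᵥ b = 0) (r s t u v : ℝ) :
    ((a + r • (a ⨯₃ b)) ⨯₃ (s • b + t • (a ⨯₃ b))) ⬝ᵥ
      (u • b + s • ((-s) • a) + v • (a ⨯₃ b)) = r * s ^ 3 + v * s - t * u := by
  simp only [dotProduct, cross_apply, Fin.sum_univ_three, Pi.add_apply, Pi.smul_apply,
    smul_eq_mul, Matrix.cons_val_zero, Matrix.cons_val_one, Matrix.head_cons,
    Matrix.cons_val_two, Matrix.tail_cons] at ha hb hab ⊢
  linear_combination ((b 0 * b 0 + b 1 * b 1 + b 2 * b 2) * (r * s ^ 3 + v * s - t * u)) * ha +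
    (r * s ^ 3 + v * s - t * u) * hb -
    ((a 0 * b 0 + a 1 * b 1 + a 2 * b 2) * (r * s ^ 3 + v * s - t * u)) * hab

/-- For a curve `p = c + φ·e₃` on a cylinder over an arc-length
parametrized planar curve `c` with frame `e₁ = c'`, `e₂`, constant ruling direction `e₃`
and curvature `κ`, the triple product `(p' × p'')·p'''` equals
`φ'·κ³ + φ'''·κ − φ''·κ'`. -/
theorem cylinder_curve_triple_product
    (I : Set ℝ) (hI : IsOpen I) (hI' : I.OrdConnected)
    (e₁ e₂ e₃ : ℝ → (Fin 3 → ℝ)) (κ φ : ℝ → ℝ) (c : ℝ → (Fin 3 → ℝ))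
    (he₁ : ∀ x ∈ I, DifferentiableAt ℝ e₁ x)
    (he₂ : ∀ x ∈ I, DifferentiableAt ℝ e₂ x)
    (he₃ : ∀ x ∈ I, DifferentiableAt ℝ e₃ x)
    (hκ : ∀ x ∈ I, DifferentiableAt ℝ κ x)
    (hon₁ : ∀ x ∈ I, e₁ x ⬝ᵥ e₁ x = 1)
    (hon₂ : ∀ x ∈ I, e₂ x ⬝ᵥ e₂ x = 1)
    (hon₁₂ : ∀ x ∈ I, e₁ x ⬝ᵥ e₂ x = 0)
    (hor : ∀ x ∈ I, e₃ x = e₁ x ⨯₃ e₂ x)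
    (hd₁ : ∀ x ∈ I, deriv e₁ x = κ x • e₂ x)
    (hd₂ : ∀ x ∈ I, deriv e₂ x = -(κ x) • e₁ x)
    (hd₃ : ∀ x ∈ I, deriv e₃ x = 0)
    (hc : ∀ x ∈ I, DifferentiableAt ℝ c x)
    (hc' : ∀ x ∈ I, deriv c x = e₁ x)
    (hφ : ∀ x ∈ I, DifferentiableAt ℝ φ x)
    (hφ' : ∀ x ∈ I, DifferentiableAt ℝ (deriv φ) x)
    (hφ'' : ∀ x ∈ I, DifferentiableAt ℝ (deriv (deriv φ)) x)
    (p : ℝ → (Fin 3 → ℝ)) (hp : p = fun x => c x + φ x • e₃ x) :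
    ∀ x ∈ I,
      (deriv p x ⨯₃ deriv (deriv p) x) ⬝ᵥ deriv (deriv (deriv p)) x =
        deriv φ x * (κ x) ^ 3 + deriv (deriv (deriv φ)) x * κ x -
          deriv (deriv φ) x * deriv κ x := by
  -- first derivative
  have h1 : ∀ y ∈ I, deriv p y = e₁ y + deriv φ y • e₃ y := by
    intro y hy
    rw [hp, deriv_fun_add (hc y hy) ((hφ y hy).fun_smul (he₃ y hy)),
      deriv_fun_smul (hφ y hy) (he₃ y hy), hc' y hy, hd₃ y hy]
    simp
  -- second derivative
  have h2 : ∀ y ∈ I, deriv (deriv p) y = κ y • e₂ y + deriv (deriv φ) y • e₃ y := by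
    intro y hy
    have heq : deriv p =ᶠ[nhds y] fun z => e₁ z + deriv φ z • e₃ z := by
      filter_upwards [hI.mem_nhds hy] with z hz using h1 z hz
    rw [heq.deriv_eq, deriv_fun_add (he₁ y hy) ((hφ' y hy).fun_smul (he₃ y hy)),
      deriv_fun_smul (hφ' y hy) (he₃ y hy), hd₁ y hy, hd₃ y hy]
    simp
  intro x hx
  -- third derivative
  have h3 : deriv (deriv (deriv p)) x =
      deriv κ x • e₂ x + κ x • (-(κ x) • e₁ x) + deriv (deriv (deriv φ)) x • e₃ x := by
    have heq : deriv (deriv p) =ᶠ[nhds x] fun z => κ z • e₂ z + deriv (deriv φ) z • e₃ z := by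
      filter_upwards [hI.mem_nhds hx] with z hz using h2 z hz
    rw [heq.deriv_eq, deriv_fun_add ((hκ x hx).fun_smul (he₂ x hx)) ((hφ'' x hx).fun_smul (he₃ x hx)),
      deriv_fun_smul (hκ x hx) (he₂ x hx), deriv_fun_smul (hφ'' x hx) (he₃ x hx),
      hd₂ x hx, hd₃ x hx]
    simp
    abel
  rw [h1 x hx, h2 x hx, h3, hor x hx]
  have := triple_alg (e₁ x) (e₂ x) (hon₁ x hx) (hon₂ x hx) (hon₁₂ x hx)
    (deriv φ x) (κ x) (deriv (deriv φ) x) (deriv κ x) (deriv (deriv (deriv φ)) x)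
  convert this using 2
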